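/- Let μ > 0, κ > 0, k > 0 and k̂ > 1/8. The Cauchy-stress map σ_eH : Sym(3) → Sym(3) defined by σ_eH(X) = 2μ·exp(k‖dev₃ X‖² − tr X)·dev₃ X + κ·exp(k̂(tr X)² − tr X)·tr(X)·1 is a bijection of Sym(3) onto Sym(3). -/

import Mathlib

open Matrix Real Filter

/-! ### Auxiliary scalar lemmas -/

/-- The scalar model map `x ↦ a·e^{bx²+cx}·x`. -/
noncomputable def fscal (a b c x : ℝ) : ℝ := a * Real.exp (b*x^2 + c*x) * x

lemma quad_pos {b c : ℝ} (hb : 0 < b) (hc : c^2 < 8*b) (x : ℝ) :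
    0 < 2*b*x^2 + c*x + 1 := by
  nlinarith [sq_nonneg (4*b*x + c)]

lemma fscal_hasDerivAt (a b c x : ℝ) :
    HasDerivAt (fscal a b c) (a * Real.exp (b*x^2+c*x) * (2*b*x^2 + c*x + 1)) x := by
  have h1 : HasDerivAt (fun y : ℝ => b*y^2 + c*y) (2*b*x + c) x := by
    have := ((hasDerivAt_pow 2 x).const_mul b).add ((hasDerivAt_id x).const_mul c)
    simpa [Pi.add_def] using this.congr_deriv (by ring)
  have h2 := ((h1.exp.mul (hasDerivAt_id x)).const_mul a)
  have h3 : HasDerivAt (fun y : ℝ => a * Real.exp (b*y^2+c*y) * y)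
      (a * (Real.exp (b*x^2+c*x) * ((2*(b*x)+c) * x) + Real.exp (b*x^2+c*x))) x := by
    simpa [mul_assoc] using h2
  exact h3.congr_deriv (by ring)

lemma fscal_strictMono {a b c : ℝ} (ha : 0 < a) (hb : 0 < b) (hc : c^2 < 8*b) :
    StrictMono (fscal a b c) := by
  apply strictMono_of_deriv_pos
  intro x
  rw [(fscal_hasDerivAt a b c x).deriv]
  exact mul_pos (mul_pos ha (Real.exp_pos _)) (quad_pos hb hc x)

lemma fscal_tendsto_atTop {a b : ℝ} (c : ℝ) (ha : 0 < a) (hb : 0 < b) :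
    Tendsto (fscal a b c) atTop atTop := by
  apply tendsto_atTop_mono' atTop _ (Tendsto.const_mul_atTop ha tendsto_id)
  filter_upwards [eventually_ge_atTop 0, eventually_ge_atTop (-c/b)] with x hx0 hxc
  have hbx : -c ≤ x * b := (div_le_iff₀ hb).mp hxc
  have h1 : (0:ℝ) ≤ b*x^2 + c*x := by nlinarith
  have h2 := Real.one_le_exp h1
  simp only [fscal, id]
  nlinarith [mul_nonneg (mul_nonneg ha.le hx0) (sub_nonneg.mpr h2)]

lemma fscal_tendsto_atBot {a b : ℝ} (c : ℝ) (ha : 0 < a) (hb : 0 < b) :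
    Tendsto (fscal a b c) atBot atBot := by
  apply tendsto_atBot_mono' atBot _ (Tendsto.const_mul_atBot ha tendsto_id)
  filter_upwards [eventually_le_atBot 0, eventually_le_atBot (-c/b)] with x hx0 hxc
  have hbx : x * b ≤ -c := (le_div_iff₀ hb).mp hxc
  have h1 : (0:ℝ) ≤ b*x^2 + c*x := by nlinarith
  have h2 := Real.one_le_exp h1
  simp only [fscal, id]
  nlinarith [mul_nonneg (mul_nonneg ha.le (neg_nonneg.mpr hx0)) (sub_nonneg.mpr h2)]

lemma fscal_bijective {a b c : ℝ} (ha : 0 < a) (hb : 0 < b) (hc : c^2 < 8*b) :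
    Function.Bijective (fscal a b c) := by
  refine ⟨(fscal_strictMono ha hb hc).injective, ?_⟩
  have hcont : Continuous (fscal a b c) := by unfold fscal; fun_prop
  exact hcont.surjective (fscal_tendsto_atTop c ha hb) (fscal_tendsto_atBot c ha hb)

/-! ### Statement definitions -/

/-- The deviatoric (trace-free) part of a 3×3 matrix: `dev₃ X = X − (tr X/3)·1`. -/
noncomputable def dev3 (X : Matrix (Fin 3) (Fin 3) ℝ) : Matrix (Fin 3) (Fin 3) ℝ :=
  X - (X.trace / 3) • (1 : Matrix (Fin 3) (Fin 3) ℝ)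

/-- The Frobenius inner product `⟨A, B⟩ = tr(A Bᵀ)`. -/
noncomputable def minner (A B : Matrix (Fin 3) (Fin 3) ℝ) : ℝ := (A * Bᵀ).trace

/-- The Cauchy stress of the exponentiated Hencky energy as a function of the
logarithmic strain `X = log V`:
`σ_eH(X) = 2μ·e^{k‖dev₃X‖² − trX}·dev₃X + κ·e^{k̂(trX)² − trX}·tr(X)·1`. -/
noncomputable def sigmaEH (μ κ k khat : ℝ) (X : Matrix (Fin 3) (Fin 3) ℝ) :
    Matrix (Fin 3) (Fin 3) ℝ :=
  (2 * μ * Real.exp (k * minner (dev3 X) (dev3 X) - X.trace)) • dev3 X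
    + (κ * Real.exp (khat * X.trace ^ 2 - X.trace) * X.trace) •
        (1 : Matrix (Fin 3) (Fin 3) ℝ)

/-! ### Auxiliary matrix lemmas -/

lemma minner_self_eq_sum (A : Matrix (Fin 3) (Fin 3) ℝ) :
    minner A A = ∑ i, ∑ j, (A i j)^2 := by
  simp [minner, Matrix.trace, Matrix.mul_apply, Matrix.diag, sq]

lemma minner_self_nonneg (A : Matrix (Fin 3) (Fin 3) ℝ) : 0 ≤ minner A A := by
  rw [minner_self_eq_sum]
  exact Finset.sum_nonneg fun i _ => Finset.sum_nonneg fun j _ => sq_nonneg _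

lemma eq_zero_of_minner_self (A : Matrix (Fin 3) (Fin 3) ℝ) (h : minner A A = 0) : A = 0 := by
  rw [minner_self_eq_sum] at h
  ext i j
  have h1 := (Finset.sum_eq_zero_iff_of_nonneg (fun i _ =>
    Finset.sum_nonneg fun j _ => sq_nonneg (A i j))).mp h i (Finset.mem_univ i)
  have h2 := (Finset.sum_eq_zero_iff_of_nonneg (fun j _ => sq_nonneg (A i j))).mp h1 j
    (Finset.mem_univ j)
  simpa using pow_eq_zero_iff (n := 2) (by norm_num) |>.mp h2

lemma minner_smul (c : ℝ) (A : Matrix (Fin 3) (Fin 3) ℝ) :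
    minner (c • A) (c • A) = c^2 * minner A A := by
  simp [minner, Matrix.transpose_smul, Matrix.smul_mul, Matrix.mul_smul, smul_smul, sq]

lemma trace_dev3 (X : Matrix (Fin 3) (Fin 3) ℝ) : (dev3 X).trace = 0 := by
  simp [dev3, Matrix.trace_sub, Matrix.trace_smul, Matrix.trace_one]

lemma dev3_add_smul_one (D : Matrix (Fin 3) (Fin 3) ℝ) (hD : D.trace = 0) (t : ℝ) :
    dev3 (D + (t/3) • 1) = D := by
  simp [dev3, Matrix.trace_add, Matrix.trace_smul, Matrix.trace_one, hD]

lemma trace_add_smul_one (D : Matrix (Fin 3) (Fin 3) ℝ) (hD : D.trace = 0) (t : ℝ) :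
    (D + (t/3) • (1 : Matrix (Fin 3) (Fin 3) ℝ)).trace = t := by
  simp [Matrix.trace_add, Matrix.trace_smul, Matrix.trace_one, hD]

lemma dev3_add_trace (X : Matrix (Fin 3) (Fin 3) ℝ) :
    dev3 X + (X.trace/3) • (1 : Matrix (Fin 3) (Fin 3) ℝ) = X := by
  simp [dev3]

lemma dev3_isSymm {X : Matrix (Fin 3) (Fin 3) ℝ} (h : X.IsSymm) : (dev3 X).IsSymm := by
  unfold Matrix.IsSymm at *
  simp [dev3, Matrix.transpose_sub, Matrix.transpose_smul, h]

lemma smul_isSymm (c : ℝ) {X : Matrix (Fin 3) (Fin 3) ℝ} (h : X.IsSymm) : (c • X).IsSymm := by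
  unfold Matrix.IsSymm at *
  simp [Matrix.transpose_smul, h]

lemma add_isSymm {X Y : Matrix (Fin 3) (Fin 3) ℝ} (hX : X.IsSymm) (hY : Y.IsSymm) :
    (X + Y).IsSymm := by
  unfold Matrix.IsSymm at *
  simp [Matrix.transpose_add, hX, hY]

lemma trace_sigmaEH (μ κ k khat : ℝ) (X : Matrix (Fin 3) (Fin 3) ℝ) :
    (sigmaEH μ κ k khat X).trace = fscal (3*κ) khat (-1) X.trace := by
  have he : khat * X.trace ^ 2 - X.trace = khat * X.trace ^ 2 + (-1) * X.trace := by ring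
  simp only [sigmaEH, Matrix.trace_add, Matrix.trace_smul, Matrix.trace_one, trace_dev3,
    fscal, he, smul_eq_mul, Fintype.card_fin]
  push_cast
  ring

/-- True-stress–true-strain invertibility (TSTS-I): for `μ, κ, k > 0` and `k̂ > 1/8`,
the Cauchy stress map `σ_eH` is a bijection of `Sym(3)` onto `Sym(3)`. -/
theorem sigmaEH_bijOn_sym (μ κ k khat : ℝ) (hμ : 0 < μ) (hκ : 0 < κ) (hk : 0 < k)
    (hkhat : 1 / 8 < khat) :
    Set.BijOn (sigmaEH μ κ k khat)
      {A : Matrix (Fin 3) (Fin 3) ℝ | A.IsSymm}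
      {A : Matrix (Fin 3) (Fin 3) ℝ | A.IsSymm} := by
  have hkh0 : (0:ℝ) < khat := lt_trans (by norm_num) hkhat
  have hgbij : Function.Bijective (fscal (3*κ) khat (-1)) :=
    fscal_bijective (by positivity) hkh0 (by nlinarith)
  refine ⟨?_, ?_, ?_⟩
  · -- MapsTo
    intro X hX
    exact add_isSymm (smul_isSymm _ (dev3_isSymm hX)) (smul_isSymm _ (Matrix.isSymm_one))
  · -- InjOn
    intro X hX Y hY hσ
    have ht : X.trace = Y.trace := hgbij.1 (by
      rw [← trace_sigmaEH μ κ k khat X, ← trace_sigmaEH μ κ k khat Y, hσ])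
    have hdev : (2 * μ * Real.exp (k * minner (dev3 X) (dev3 X) - Y.trace)) • dev3 X
        = (2 * μ * Real.exp (k * minner (dev3 Y) (dev3 Y) - Y.trace)) • dev3 Y := by
      have h := hσ
      simp only [sigmaEH, ht] at h
      exact add_right_cancel h
    set qX := minner (dev3 X) (dev3 X) with hqX
    set qY := minner (dev3 Y) (dev3 Y) with hqY
    have hqX0 : 0 ≤ qX := minner_self_nonneg _
    have hqY0 : 0 ≤ qY := minner_self_nonneg _
    set a := 2 * μ * Real.exp (-Y.trace) with ha
    have ha0 : 0 < a := by positivity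
    have hcoef : ∀ q : ℝ, 2 * μ * Real.exp (k * q - Y.trace) = a * Real.exp (k * q) := by
      intro q
      rw [ha, sub_eq_add_neg, Real.exp_add]
      ring
    have hsq : (a * Real.exp (k * qX))^2 * qX = (a * Real.exp (k * qY))^2 * qY := by
      have := congrArg (fun M => minner M M) hdev
      simpa [minner_smul, hcoef, ← hqX, ← hqY] using this
    have hfs : ∀ q : ℝ, 0 ≤ q → fscal a k 0 (Real.sqrt q) = a * Real.exp (k * q) * Real.sqrt q := by
      intro q hq
      simp [fscal, Real.sq_sqrt hq]
    have hsqe : ∀ q : ℝ, 0 ≤ q → (a * Real.exp (k * q) * Real.sqrt q)^2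
        = (a * Real.exp (k * q))^2 * q := by
      intro q hq
      rw [mul_pow, Real.sq_sqrt hq]
    have hsq' : (fscal a k 0 (Real.sqrt qX))^2 = (fscal a k 0 (Real.sqrt qY))^2 := by
      rw [hfs qX hqX0, hfs qY hqY0, hsqe qX hqX0, hsqe qY hqY0]
      exact hsq
    have hfnn : ∀ q : ℝ, 0 ≤ q → 0 ≤ fscal a k 0 (Real.sqrt q) := by
      intro q hq
      rw [hfs q hq]
      positivity
    have hfeq : fscal a k 0 (Real.sqrt qX) = fscal a k 0 (Real.sqrt qY) := by
      calc fscal a k 0 (Real.sqrt qX)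
          = Real.sqrt ((fscal a k 0 (Real.sqrt qX))^2) := (Real.sqrt_sq (hfnn qX hqX0)).symm
        _ = Real.sqrt ((fscal a k 0 (Real.sqrt qY))^2) := by rw [hsq']
        _ = fscal a k 0 (Real.sqrt qY) := Real.sqrt_sq (hfnn qY hqY0)
    have hr : Real.sqrt qX = Real.sqrt qY :=
      (fscal_strictMono ha0 hk (by nlinarith)).injective hfeq
    have hq : qX = qY := by
      rw [← Real.sq_sqrt hqX0, ← Real.sq_sqrt hqY0, hr]
    have hα : (0:ℝ) < 2 * μ * Real.exp (k * qY - Y.trace) := by positivity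
    have hDeq : dev3 X = dev3 Y := by
      rw [hq] at hdev
      exact smul_right_injective (Matrix (Fin 3) (Fin 3) ℝ) (ne_of_gt hα) hdev
    calc X = dev3 X + (X.trace/3) • 1 := (dev3_add_trace X).symm
      _ = dev3 Y + (Y.trace/3) • 1 := by rw [hDeq, ht]
      _ = Y := dev3_add_trace Y
  · -- SurjOn
    intro S hS
    obtain ⟨t, hgt⟩ := hgbij.2 S.trace
    set a := 2 * μ * Real.exp (-t) with ha
    have ha0 : 0 < a := by positivity
    obtain ⟨r, hr⟩ := (fscal_bijective ha0 hk (c := 0) (by nlinarith)).2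
      (Real.sqrt (minner (dev3 S) (dev3 S)))
    set ρ := Real.sqrt (minner (dev3 S) (dev3 S)) with hρ
    set D := (r/ρ) • dev3 S with hD
    have hDtr : D.trace = 0 := by
      rw [hD, Matrix.trace_smul, trace_dev3, smul_zero]
    set X := D + (t/3) • (1 : Matrix (Fin 3) (Fin 3) ℝ) with hX
    have hXtr : X.trace = t := trace_add_smul_one D hDtr t
    have hXdev : dev3 X = D := dev3_add_smul_one D hDtr t
    have hSsymm : S.IsSymm := hS
    refine ⟨X, ?_, ?_⟩
    · exact add_isSymm (smul_isSymm _ (dev3_isSymm hSsymm)) (smul_isSymm _ Matrix.isSymm_one)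
    · -- σ X = S
      have hpart2 : κ * Real.exp (khat * t ^ 2 - t) * t = S.trace / 3 := by
        have he : khat * t ^ 2 + (-1) * t = khat * t ^ 2 - t := by ring
        rw [fscal, he] at hgt
        linarith
      have hpart1 : (2 * μ * Real.exp (k * minner D D - t)) • D = dev3 S := by
        by_cases h0 : dev3 S = 0
        · simp [hD, h0]
        · have hqS : 0 < minner (dev3 S) (dev3 S) := by
            rcases lt_or_eq_of_le (minner_self_nonneg (dev3 S)) with h | h
            · exact h
            · exact absurd (eq_zero_of_minner_self _ h.symm) h0
          have hρ0 : 0 < ρ := Real.sqrt_pos.mpr hqS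
          have hρsq : ρ^2 = minner (dev3 S) (dev3 S) := Real.sq_sqrt hqS.le
          have hqD : minner D D = r^2 := by
            rw [hD, minner_smul, ← hρsq, div_pow]
            field_simp
          rw [hqD, hD, smul_smul]
          have hcoef : 2 * μ * Real.exp (k * r ^ 2 - t) * (r / ρ) = 1 := by
            have hfr : a * Real.exp (k * r^2) * r = ρ := by
              have := hr
              rw [fscal] at this
              simpa using this
            have hab : 2 * μ * Real.exp (k * r ^ 2 - t) = a * Real.exp (k * r^2) := by
              rw [ha, sub_eq_add_neg, Real.exp_add]
              ring
            rw [hab]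
            field_simp
            linarith [hfr]
          rw [hcoef, one_smul]
      calc sigmaEH μ κ k khat X
          = (2 * μ * Real.exp (k * minner D D - t)) • D
              + (κ * Real.exp (khat * t ^ 2 - t) * t) • 1 := by
            rw [sigmaEH, hXtr, hXdev]
        _ = dev3 S + (S.trace/3) • 1 := by rw [hpart1, hpart2]
        _ = S := dev3_add_trace S
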